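/- Let K be a naturally ordered positive commutative semiring, D a finite set, R, S : D × D → K, and let f_R, f_S be any choice functions selecting for each a with some R(a,·) ≠ 0 a value b with R(a,b) ≠ 0, and for each b with some S(b,·) ≠ 0 a value c with S(b,c) ≠ 0. Then Σ_{a ∈ D} min_{b : R(a,b) ≠ 0}( R(a,b) × min_{c : S(b,c) ≠ 0} S(b,c) ) ≤_K Σ_{a : ∃b R(a,b)≠0} R(a, f_R(a)) × (S-value at f_R(a) under f_S, where the value is 0 if S(f_R(a),·) has empty support), with min ∅ = 0. -/

import Mathlib

/-- The canonical preorder of a commutative semiring. -/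
def canLe {K : Type*} [CommSemiring K] (a b : K) : Prop := ∃ c, a + c = b

/-- `m` is the minimum of `A` with respect to the canonical preorder,
with the convention `min ∅ = 0`. -/
def IsMinOf {K : Type*} [CommSemiring K] (m : K) (A : Set K) : Prop :=
  (A = ∅ ∧ m = 0) ∨ (m ∈ A ∧ ∀ x ∈ A, canLe m x)

theorem canLe_refl' {K : Type*} [CommSemiring K] (a : K) : canLe a a := ⟨0, add_zero a⟩

theorem canLe_trans' {K : Type*} [CommSemiring K] {a b c : K} (h1 : canLe a b)
    (h2 : canLe b c) : canLe a c := by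
  obtain ⟨u, hu⟩ := h1; obtain ⟨v, hv⟩ := h2
  exact ⟨u + v, by rw [← add_assoc, hu, hv]⟩

theorem canLe_mul_left' {K : Type*} [CommSemiring K] {a b : K} (r : K) (h : canLe a b) :
    canLe (r * a) (r * b) := by
  obtain ⟨u, hu⟩ := h
  exact ⟨r * u, by rw [← mul_add, hu]⟩

theorem canLe_sum' {K : Type*} [CommSemiring K] {ι : Type*} (s : Finset ι) (f g : ι → K)
    (h : ∀ i ∈ s, canLe (f i) (g i)) : canLe (∑ i ∈ s, f i) (∑ i ∈ s, g i) := by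
  classical
  induction s using Finset.induction with
  | empty => exact canLe_refl' 0
  | insert a s' hi ih =>
    rw [Finset.sum_insert hi, Finset.sum_insert hi]
    obtain ⟨u, hu⟩ := h a (Finset.mem_insert_self a s')
    obtain ⟨v, hv⟩ := ih fun i his => h i (Finset.mem_insert_of_mem his)
    exact ⟨u + v, by rw [show f a + ∑ i ∈ s', f i + (u + v) =
      (f a + u) + (∑ i ∈ s', f i + v) by ring, hu, hv]⟩

open Classical in
/-- The value of the query `q_path` on the repair determined by the choice
functions `fR` and `fS`. -/
noncomputable def qpathRepairValue {K : Type*} [CommSemiring K] {D : Type*} [Fintype D]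
    (R S : D → D → K) (fR fS : D → D) : K :=
  ∑ a ∈ Finset.univ.filter (fun a => ∃ b, R a b ≠ 0),
    R a (fR a) * (if ∃ c, S (fR a) c ≠ 0 then S (fR a) (fS (fR a)) else 0)

theorem qpath_rewriting_lower_bound {K : Type*} [CommSemiring K]
    (hzd : ∀ a b : K, a * b = 0 → a = 0 ∨ b = 0)
    (hpos : ∀ a b : K, a + b = 0 → a = 0 ∧ b = 0)
    (hanti : ∀ a b : K, canLe a b → canLe b a → a = b)
    (htot : ∀ a b : K, canLe a b ∨ canLe b a)
    {D : Type*} [Fintype D]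
    (R S : D → D → K)
    (mS : D → K)
    (hmS : ∀ b, IsMinOf (mS b) {x | ∃ c, S b c ≠ 0 ∧ x = S b c})
    (mRS : D → K)
    (hmRS : ∀ a, IsMinOf (mRS a) {x | ∃ b, R a b ≠ 0 ∧ x = R a b * mS b})
    (fR fS : D → D)
    (hfR : ∀ a, (∃ b, R a b ≠ 0) → R a (fR a) ≠ 0)
    (hfS : ∀ b, (∃ c, S b c ≠ 0) → S b (fS b) ≠ 0) :
    canLe (∑ a : D, mRS a) (qpathRepairValue R S fR fS) := by
  classical
  unfold qpathRepairValue
  have hsum : (∑ a : D, mRS a)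
      = ∑ a ∈ Finset.univ.filter (fun a => ∃ b, R a b ≠ 0), mRS a := by
    symm
    apply Finset.sum_filter_of_ne
    intro a _ hne
    -- if ¬∃ b, R a b ≠ 0 then mRS a = 0
    by_contra hA'
    rcases hmRS a with ⟨_, hm0⟩ | ⟨hmem, _⟩
    · exact hne hm0
    · obtain ⟨b, hb, _⟩ := hmem
      exact hA' ⟨b, hb⟩
  rw [hsum]
  apply canLe_sum'
  intro a ha
  have hA : ∃ b, R a b ≠ 0 := (Finset.mem_filter.mp ha).2
  have hR : R a (fR a) ≠ 0 := hfR a hA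
  -- mRS a ≤ R a (fR a) * mS (fR a)
  have hRSmem : (R a (fR a) * mS (fR a)) ∈ {x | ∃ b, R a b ≠ 0 ∧ x = R a b * mS b} :=
    ⟨fR a, hR, rfl⟩
  have h1 : canLe (mRS a) (R a (fR a) * mS (fR a)) := by
    rcases hmRS a with ⟨hemp, _⟩ | ⟨_, hmin⟩
    · exact absurd (hemp ▸ hRSmem) (Set.notMem_empty _)
    · exact hmin _ hRSmem
  by_cases hS : ∃ c, S (fR a) c ≠ 0
  · rw [if_pos hS]
    refine canLe_trans' h1 (canLe_mul_left' _ ?_)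
    have hSmem : S (fR a) (fS (fR a)) ∈ {x | ∃ c, S (fR a) c ≠ 0 ∧ x = S (fR a) c} :=
      ⟨fS (fR a), hfS _ hS, rfl⟩
    rcases hmS (fR a) with ⟨hemp, _⟩ | ⟨_, hmin⟩
    · exact absurd (hemp ▸ hSmem) (Set.notMem_empty _)
    · exact hmin _ hSmem
  · rw [if_neg hS, mul_zero]
    have hmS0 : mS (fR a) = 0 := by
      rcases hmS (fR a) with ⟨_, h0⟩ | ⟨⟨c, hc, _⟩, _⟩
      · exact h0
      · exact absurd ⟨c, hc⟩ hS
    rw [hmS0, mul_zero] at h1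
    obtain ⟨u, hu⟩ := h1
    rw [(hpos _ _ hu).1]
    exact canLe_refl' 0
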